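/- Let H be a finite-dimensional real inner product space, and let f, g : H → ℝ be differentiable with ∇f L_f-Lipschitz continuous and ∇g L_g-Lipschitz continuous (L_f, L_g > 0). Let 0 < η < 1/L_g. Let x, z ∈ H, let u be a global minimizer over w ∈ H of g(w) + (1/(2η))‖w − (x − η∇f(x))‖², and let v be a global minimizer over w ∈ H of g(w) + (1/(2η))‖w − (z − η∇f(z))‖². Then ‖(u − x) − (v − z)‖ ≤ (η(L_f + L_g)/(1 − ηL_g))·‖x − z‖. -/

import Mathlib

open InnerProductSpace

lemma key {H : Type*} [NormedAddCommGroup H] [InnerProductSpace ℝ H] [CompleteSpace H]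
    (g : H → ℝ) (g' : H → H) (hg : ∀ y, HasGradientAt g (g' y) y)
    (η : ℝ) (hη : 0 < η) (c u : H)
    (hu : ∀ w, g u + 1 / (2 * η) * ‖u - c‖ ^ 2 ≤ g w + 1 / (2 * η) * ‖w - c‖ ^ 2) :
    u - c = -(η • g' u) := by
  have h1 : HasFDerivAt (fun w => ‖w - c‖ ^ 2)
      (2 • (innerSL ℝ (u - c)).comp (ContinuousLinearMap.id ℝ H)) u :=
    ((hasFDerivAt_id u).sub_const c).norm_sq
  have h2 : HasFDerivAt (fun w => g w + 1 / (2 * η) * ‖w - c‖ ^ 2)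
      (toDual ℝ H (g' u) + (1 / (2 * η)) • (2 • (innerSL ℝ (u - c)).comp
        (ContinuousLinearMap.id ℝ H))) u :=
    (hg u).hasFDerivAt.add (h1.const_smul (1 / (2 * η)))
  have hmin : IsLocalMin (fun w => g w + 1 / (2 * η) * ‖w - c‖ ^ 2) u :=
    (isMinOn_univ_iff.mpr fun w => hu w).isLocalMin Filter.univ_mem
  have h0 := hmin.hasFDerivAt_eq_zero h2
  set w0 : H := g' u + η⁻¹ • (u - c) with hw0
  have happ := congrArg (fun L : H →L[ℝ] ℝ => L w0) h0
  simp only [ContinuousLinearMap.add_apply, ContinuousLinearMap.smul_apply,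
    ContinuousLinearMap.coe_smul', Pi.smul_apply, ContinuousLinearMap.coe_comp',
    Function.comp_apply, ContinuousLinearMap.coe_id', id_eq, innerSL_apply_apply,
    toDual_apply_apply, ContinuousLinearMap.zero_apply, smul_eq_mul,
    nsmul_eq_mul, Nat.cast_ofNat] at happ
  have hco : (1 : ℝ) / (2 * η) * (2 * ⟪u - c, w0⟫_ℝ) = η⁻¹ * ⟪u - c, w0⟫_ℝ := by
    field_simp
  have hinner : ⟪w0, w0⟫_ℝ = 0 := by
    rw [hw0, inner_add_left, real_inner_smul_left]
    rw [hco] at happ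
    linarith
  have hz : w0 = 0 := inner_self_eq_zero.mp hinner
  have : η⁻¹ • (u - c) = -g' u := by
    rw [hw0] at hz; rw [eq_neg_iff_add_eq_zero]; linear_combination (norm := module) hz
  calc u - c = η • (η⁻¹ • (u - c)) := by rw [smul_smul, mul_inv_cancel₀ hη.ne', one_smul]
    _ = -(η • g' u) := by rw [this, smul_neg]

open Filter Topology

noncomputable abbrev EE (p : ℕ) (d : Fin p → ℕ) : Type :=
  PiLp 2 (fun i : Fin p => EuclideanSpace ℝ (Fin (d i)))
theorem stmt_17
    (H : Type*) [NormedAddCommGroup H] [InnerProductSpace ℝ H] [FiniteDimensional ℝ H]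
    (f g : H → ℝ) (f' g' : H → H) (Lf Lg : ℝ) (hLf : 0 < Lf) (hLg : 0 < Lg)
    (hf : ∀ y, HasGradientAt f (f' y) y) (hg : ∀ y, HasGradientAt g (g' y) y)
    (hf_lip : ∀ y z, ‖f' y - f' z‖ ≤ Lf * ‖y - z‖)
    (hg_lip : ∀ y z, ‖g' y - g' z‖ ≤ Lg * ‖y - z‖)
    (η : ℝ) (hη : 0 < η) (hη' : η < 1 / Lg)
    (x z u v : H)
    (hu : ∀ w, g u + 1 / (2 * η) * ‖u - (x - η • f' x)‖ ^ 2 ≤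
      g w + 1 / (2 * η) * ‖w - (x - η • f' x)‖ ^ 2)
    (hv : ∀ w, g v + 1 / (2 * η) * ‖v - (z - η • f' z)‖ ^ 2 ≤
      g w + 1 / (2 * η) * ‖w - (z - η • f' z)‖ ^ 2) :
    ‖(u - x) - (v - z)‖ ≤ η * (Lf + Lg) / (1 - η * Lg) * ‖x - z‖ := by
  have hU := key g g' hg η hη (x - η • f' x) u hu
  have hV := key g g' hg η hη (z - η • f' z) v hv
  have hux : u - x = -(η • f' x) - η • g' u := by
    have : u - x = (u - (x - η • f' x)) - η • f' x := by abel
    rw [this, hU]; abel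
  have hvz : v - z = -(η • f' z) - η • g' v := by
    have : v - z = (v - (z - η • f' z)) - η • f' z := by abel
    rw [this, hV]; abel
  have hdiff : (u - x) - (v - z) = η • (f' z - f' x) + η • (g' v - g' u) := by
    rw [hux, hvz, smul_sub, smul_sub]; abel
  set A := ‖(u - x) - (v - z)‖ with hA
  have hA1 : A ≤ η * (Lf * ‖x - z‖) + η * (Lg * ‖u - v‖) := by
    calc A = ‖η • (f' z - f' x) + η • (g' v - g' u)‖ := by rw [hA, hdiff]
      _ ≤ ‖η • (f' z - f' x)‖ + ‖η • (g' v - g' u)‖ := norm_add_le _ _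
      _ = η * ‖f' z - f' x‖ + η * ‖g' v - g' u‖ := by
          rw [norm_smul, norm_smul, Real.norm_eq_abs, abs_of_pos hη]
      _ ≤ η * (Lf * ‖x - z‖) + η * (Lg * ‖u - v‖) := by
          have h1 := hf_lip z x
          have h2 := hg_lip v u
          rw [show z - x = -(x - z) by abel, norm_neg] at h1
          rw [show v - u = -(u - v) by abel, norm_neg] at h2
          gcongr
  have huv : ‖u - v‖ ≤ A + ‖x - z‖ := by
    calc ‖u - v‖ = ‖((u - x) - (v - z)) + (x - z)‖ := by congr 1; abel
      _ ≤ A + ‖x - z‖ := norm_add_le _ _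
  have hden : 0 < 1 - η * Lg := by
    have : η * Lg < 1 := by
      have := (lt_div_iff₀ hLg).mp hη'
      linarith
    linarith
  rw [div_mul_eq_mul_div, le_div_iff₀ hden]
  have hηLg : 0 ≤ η * Lg := le_of_lt (mul_pos hη hLg)
  nlinarith [norm_nonneg (x - z), norm_nonneg ((u - x) - (v - z)), mul_pos hη hLg]
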